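/- Let ε = μ0(A) ∈ (0,1), let t > 1, and set λ = t(t−1)/(t−1+ε). Define μ* as the measure with density (w.r.t. μ0) equal to λ/(t−1) on A and λ/t off A. Then μ* is a probability measure, μ*(A) = λ·ε/(t−1), and D(μ0‖μ*) = −ln( t^ε (t−1)^{1−ε}/(t−1+ε) ). (The worst-case density achieving the supremum in Theorem 3 when t is chosen so that this divergence equals d.) -/

import Mathlib

open MeasureTheory Real Filter

open scoped Classical in
/-- Kullback–Leibler divergence `D(μ‖ν)` between measures, valued in `EReal`:
infinite unless `μ ≪ ν` and the log-likelihood ratio is `μ`-integrable. -/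
noncomputable def klDiv {Ω : Type*} [MeasurableSpace Ω] (μ ν : Measure Ω) : EReal :=
  if μ ≪ ν ∧ Integrable (llr μ ν) μ then ((∫ ω, llr μ ν ω ∂μ : ℝ) : EReal) else ⊤

open scoped Classical in
/-- The worst-case density achieving the supremum in Theorem 3: with
`λ = t(t−1)/(t−1+ε)`, the measure with density `λ/(t−1)` on `A` and `λ/t` off `A`
(w.r.t. `μ0`) is a probability measure with `μ*(A) = λ·ε/(t−1)` and
`D(μ0‖μ*) = −ln(t^ε(t−1)^{1−ε}/(t−1+ε))`. -/
theorem stmt_15 {Ω : Type*} [MeasurableSpace Ω] (μ0 : Measure Ω) [IsProbabilityMeasure μ0]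
    (A : Set Ω) (hA : MeasurableSet A) (he : (μ0 A).toReal ∈ Set.Ioo (0 : ℝ) 1)
    (t : ℝ) (ht : 1 < t) :
    let ε : ℝ := (μ0 A).toReal
    let lam : ℝ := t * (t - 1) / (t - 1 + ε)
    let μ : Measure Ω := μ0.withDensity
      (fun ω => ENNReal.ofReal (if ω ∈ A then lam / (t - 1) else lam / t))
    IsProbabilityMeasure μ ∧
    (μ A).toReal = lam * ε / (t - 1) ∧
    klDiv μ0 μ = ((-(Real.log (t ^ ε * (t - 1) ^ (1 - ε) / (t - 1 + ε))) : ℝ) : EReal) := by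
  intro ε lam μ
  have hε0 : 0 < ε := he.1
  have hε1 : ε < 1 := he.2
  have ht0 : (0 : ℝ) < t := lt_trans one_pos ht
  have ht1 : (0 : ℝ) < t - 1 := sub_pos.2 ht
  have hden : (0 : ℝ) < t - 1 + ε := by linarith
  have hlam : 0 < lam := div_pos (mul_pos ht0 ht1) hden
  have hc1 : 0 < lam / (t - 1) := div_pos hlam ht1
  have hc2 : 0 < lam / t := div_pos hlam ht0
  set f : Ω → ENNReal := fun ω => ENNReal.ofReal (if ω ∈ A then lam / (t - 1) else lam / t)
    with hf
  have hfm : Measurable f :=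
    (Measurable.ite hA measurable_const measurable_const).ennreal_ofReal
  have hμ0A : μ0 A = ENNReal.ofReal ε := (ENNReal.ofReal_toReal (measure_ne_top _ _)).symm
  have hμ0Ac : μ0 Aᶜ = ENNReal.ofReal (1 - ε) := by
    rw [measure_compl hA (measure_ne_top _ _), measure_univ, hμ0A,
      ENNReal.ofReal_sub _ hε0.le, ENNReal.ofReal_one]
  have hμA : μ A = ENNReal.ofReal (lam / (t - 1) * ε) := by
    show μ0.withDensity f A = _
    rw [withDensity_apply _ hA,
      setLIntegral_congr_fun (g := fun _ => ENNReal.ofReal (lam / (t - 1))) hA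
        (fun x hx => by simp [hf, hx]),
      setLIntegral_const, hμ0A, ← ENNReal.ofReal_mul hc1.le]
  have hμAc : μ Aᶜ = ENNReal.ofReal (lam / t * (1 - ε)) := by
    show μ0.withDensity f Aᶜ = _
    rw [withDensity_apply _ hA.compl,
      setLIntegral_congr_fun (g := fun _ => ENNReal.ofReal (lam / t)) hA.compl
        (fun x hx => by simp only [hf]; rw [if_neg hx]),
      setLIntegral_const, hμ0Ac, ← ENNReal.ofReal_mul hc2.le]
  have hsum : lam / (t - 1) * ε + lam / t * (1 - ε) = 1 := by
    show lam / (t - 1) * ε + lam / t * (1 - ε) = 1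
    have : lam = t * (t - 1) / (t - 1 + ε) := rfl
    rw [this]; field_simp; ring
  have hprob : IsProbabilityMeasure μ := by
    constructor
    rw [← Set.union_compl_self A, measure_union (disjoint_compl_right) hA.compl, hμA, hμAc,
      ← ENNReal.ofReal_add (mul_nonneg hc1.le hε0.le)
        (mul_nonneg hc2.le (by linarith)), hsum, ENNReal.ofReal_one]
  refine ⟨hprob, ?_, ?_⟩
  · rw [hμA, ENNReal.toReal_ofReal (mul_nonneg hc1.le hε0.le)]
    ring
  -- KL divergence
  · set g : Ω → ENNReal := fun ω => ENNReal.ofReal (if ω ∈ A then (t - 1) / lam else t / lam)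
      with hg
    have hgm : Measurable g :=
      (Measurable.ite hA measurable_const measurable_const).ennreal_ofReal
    have e1 : lam / (t - 1) * ((t - 1) / lam) = 1 := by field_simp
    have e2 : lam / t * (t / lam) = 1 := by field_simp
    have hfg : f * g = 1 := by
      funext ω
      by_cases hω : ω ∈ A <;>
        simp only [hf, hg, Pi.mul_apply, Pi.one_apply, if_pos, if_neg, hω, if_true, if_false,
          ← ENNReal.ofReal_mul hc1.le, ← ENNReal.ofReal_mul hc2.le, e1, e2, ENNReal.ofReal_one]
    have hμ0eq : μ.withDensity g = μ0 := by
      show (μ0.withDensity f).withDensity g = μ0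
      rw [← withDensity_mul μ0 hfm hgm, hfg, withDensity_one]
    have hac : μ0 ≪ μ := by
      rw [← hμ0eq]; exact withDensity_absolutelyContinuous _ _
    have hrn : μ0.rnDeriv μ =ᵐ[μ] g := by
      have := Measure.rnDeriv_withDensity μ hgm
      rwa [hμ0eq] at this
    have hrn0 : μ0.rnDeriv μ =ᵐ[μ0] g := hac.ae_le hrn
    set c1 : ℝ := Real.log ((t - 1) / lam)
    set c2 : ℝ := Real.log (t / lam)
    set h : Ω → ℝ := fun ω => if ω ∈ A then c1 else c2 with hh
    have hllr : llr μ0 μ =ᵐ[μ0] h := by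
      filter_upwards [hrn0] with ω hω
      simp only [llr_def, hω]
      by_cases hωA : ω ∈ A <;>
        simp [hg, hh, hωA, ENNReal.toReal_ofReal (div_nonneg ht1.le hlam.le),
          ENNReal.toReal_ofReal (div_nonneg ht0.le hlam.le)] <;> rfl
    have hhrw : h = fun ω => c2 + A.indicator (fun _ => c1 - c2) ω := by
      funext ω
      by_cases hωA : ω ∈ A <;> simp [hh, hωA]
    have hhint : Integrable h μ0 := by
      rw [hhrw]
      exact (integrable_const c2).add ((integrable_const (c1 - c2)).indicator hA)
    have hint : Integrable (llr μ0 μ) μ0 := hhint.congr hllr.symm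
    have hIval : ∫ ω, llr μ0 μ ω ∂μ0 = ε * c1 + (1 - ε) * c2 := by
      rw [integral_congr_ae hllr, hhrw]
      rw [integral_add (integrable_const c2) ((integrable_const (c1 - c2)).indicator hA),
        integral_const, integral_indicator hA, setIntegral_const]
      simp only [probReal_univ, smul_eq_mul, one_smul]
      show 1 * c2 + ε * (c1 - c2) = ε * c1 + (1 - ε) * c2
      ring
    rw [klDiv, if_pos ⟨hac, hint⟩, hIval]
    congr 1
    have hrpow : Real.log (t ^ ε * (t - 1) ^ (1 - ε) / (t - 1 + ε))
        = ε * Real.log t + (1 - ε) * Real.log (t - 1) - Real.log (t - 1 + ε) := by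
      rw [Real.log_div (by positivity) hden.ne',
        Real.log_mul (by positivity) (by positivity),
        Real.log_rpow ht0, Real.log_rpow ht1]
    have hloglam : Real.log lam = Real.log t + Real.log (t - 1) - Real.log (t - 1 + ε) := by
      show Real.log (t * (t - 1) / (t - 1 + ε)) = _
      rw [Real.log_div (by positivity) hden.ne', Real.log_mul ht0.ne' ht1.ne']
    have hc1' : c1 = Real.log (t - 1) - Real.log lam := Real.log_div ht1.ne' hlam.ne'
    have hc2' : c2 = Real.log t - Real.log lam := Real.log_div ht0.ne' hlam.ne'
    rw [hrpow, hc1', hc2', hloglam]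
    ring
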